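/- (Strict Bondareva–Shapley, sufficiency direction via duality.) Let (N, φ) be a characteristic function game on a finite player set N. If for every family of weights λ_C ∈ [0,1] over nonempty proper coalitions C ⊊ N with Σ_{C∋i} λ_C = 1 for all i ∈ N one has Σ_C λ_C·φ(C) < φ(N), then there exists u ∈ ℝⁿ with Σ_{i∈N} u_i = φ(N) and Σ_{i∈C} u_i > φ(C) for every nonempty proper C ⊊ N. -/

import Mathlib

theorem stmt_14 {n : ℕ} (hn : 1 ≤ n) (φ : Finset (Fin n) → ℝ)
    (h : ∀ lam : Finset (Fin n) → ℝ,
      (∀ C, lam C ∈ Set.Icc (0:ℝ) 1) →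
      (∀ i : Fin n,
        ∑ C ∈ (Finset.univ.filter
            (fun C : Finset (Fin n) => C.Nonempty ∧ C ≠ Finset.univ ∧ i ∈ C)),
          lam C = 1) →
      ∑ C ∈ (Finset.univ.filter
          (fun C : Finset (Fin n) => C.Nonempty ∧ C ≠ Finset.univ)),
        lam C * φ C < φ Finset.univ) :
    ∃ u : Fin n → ℝ, (∑ i, u i = φ Finset.univ) ∧
      ∀ C : Finset (Fin n), C.Nonempty → C ≠ Finset.univ → φ C < ∑ i ∈ C, u i := by
  classical
  -- trivial case n = 1
  rcases eq_or_lt_of_le hn with h1 | hn2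
  · refine ⟨fun _ => φ Finset.univ / n, ?_, ?_⟩
    · rw [Finset.sum_const, Finset.card_univ, Fintype.card_fin, nsmul_eq_mul]
      field_simp
    · intro C hC hCu
      exfalso
      apply hCu
      apply Finset.eq_univ_of_card
      rw [Fintype.card_fin]
      have hle := Finset.card_le_card (Finset.subset_univ C)
      rw [Finset.card_univ, Fintype.card_fin] at hle
      have hge : 1 ≤ C.card := Finset.card_pos.mpr hC
      omega
  -- main case: 2 ≤ n
  set 𝒞 : Finset (Finset (Fin n)) :=
    Finset.univ.filter (fun C : Finset (Fin n) => C.Nonempty ∧ C ≠ Finset.univ) with h𝒞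
  set i₀ : Fin n := ⟨0, hn⟩ with hi₀
  set V : Finset (Fin n) → ((Fin n → ℝ) × ℝ) :=
    fun C => (fun i => if i ∈ C then (1:ℝ) else 0, φ C) with hV
  have hVinj : Function.Injective V := by
    intro C D hCD
    have h1 := congrArg Prod.fst hCD
    ext i
    have := congrFun h1 i
    by_cases hiC : i ∈ C <;> by_cases hiD : i ∈ D <;> simp [hV, hiC, hiD] at this ⊢
  set P : Set ((Fin n → ℝ) × ℝ) := convexHull ℝ (↑(𝒞.image V)) with hP
  set L : Set ((Fin n → ℝ) × ℝ) := {p : ((Fin n → ℝ) × ℝ) | (∀ i, p.1 i = p.1 i₀) ∧ p.1 i₀ * φ Finset.univ ≤ p.2} with hL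
  have hPconv : Convex ℝ P := convex_convexHull ℝ _
  have hPcomp : IsCompact P := (Finset.finite_toSet _).isCompact_convexHull (𝕜 := ℝ)
  have hLconv : Convex ℝ L := by
    intro p hp q hq a b ha hb hab
    refine ⟨fun i => ?_, ?_⟩
    · simp only [Prod.fst_add, Prod.smul_fst, Pi.add_apply, Pi.smul_apply, smul_eq_mul]
      rw [hp.1 i, hq.1 i]
    · simp only [Prod.fst_add, Prod.smul_fst, Prod.snd_add, Prod.smul_snd, Pi.add_apply,
        Pi.smul_apply, smul_eq_mul]
      have := hp.2
      have := hq.2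
      nlinarith
  have hLclosed : IsClosed L := by
    have h1 : IsClosed {p : ((Fin n → ℝ) × ℝ) | ∀ i, p.1 i = p.1 i₀} := by
      rw [Set.setOf_forall]
      exact isClosed_iInter fun i =>
        isClosed_eq ((continuous_apply i).comp continuous_fst)
          ((continuous_apply i₀).comp continuous_fst)
    have h2 : IsClosed {p : ((Fin n → ℝ) × ℝ) | p.1 i₀ * φ Finset.univ ≤ p.2} :=
      isClosed_le (((continuous_apply i₀).comp continuous_fst).mul continuous_const)
        continuous_snd
    exact (h1.inter h2)
  -- disjointness
  have hdisj : Disjoint P L := by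
    rw [Set.disjoint_left]
    intro p hpP hpL
    rw [hP, Finset.convexHull_eq] at hpP
    obtain ⟨w, hw0, hw1, hwc⟩ := hpP
    rw [Finset.centerMass_eq_of_sum_1 _ _ hw1] at hwc
    -- rewrite sums over the image as sums over 𝒞
    have hsum1 : ∑ C ∈ 𝒞, w (V C) = 1 := by
      rw [← hw1, Finset.sum_image (fun a _ b _ hab => hVinj hab)]
    have hwc' : ∑ C ∈ 𝒞, w (V C) • V C = p := by
      rw [← hwc, Finset.sum_image (fun a _ b _ hab => hVinj hab)]
      simp
    have hw0' : ∀ C ∈ 𝒞, 0 ≤ w (V C) := fun C hC =>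
      hw0 _ (Finset.mem_image_of_mem V hC)
    -- coordinates of p
    have hp1 : ∀ i, p.1 i = ∑ C ∈ 𝒞, w (V C) * (if i ∈ C then (1:ℝ) else 0) := by
      intro i
      rw [← hwc']
      rw [Prod.fst_sum, Finset.sum_apply]
      simp [hV, Prod.smul_fst, Pi.smul_apply, smul_eq_mul, mul_ite]
    have hp2 : p.2 = ∑ C ∈ 𝒞, w (V C) * φ C := by
      rw [← hwc', Prod.snd_sum]
      simp [hV, Prod.smul_snd, smul_eq_mul]
    set t : ℝ := p.1 i₀ with ht
    have hpi : ∀ i, ∑ C ∈ 𝒞, w (V C) * (if i ∈ C then (1:ℝ) else 0) = t := by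
      intro i; rw [← hp1 i, hpL.1 i]
    -- t > 0
    have htpos : 0 < t := by
      have hnt : (n : ℝ) * t = ∑ i, p.1 i := by
        simp only [hp1, hpi]
        rw [Finset.sum_const, Finset.card_univ, Fintype.card_fin, nsmul_eq_mul]
      have hsum_ge : (1:ℝ) ≤ ∑ i, p.1 i := by
        have : ∑ i, p.1 i = ∑ C ∈ 𝒞, w (V C) * (C.card : ℝ) := by
          simp only [hp1]
          rw [Finset.sum_comm]
          congr 1
          ext C
          rw [← Finset.mul_sum]
          congr 1
          rw [Finset.sum_ite_mem, Finset.univ_inter, Finset.sum_const, nsmul_eq_mul, mul_one]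
        rw [this, ← hsum1]
        apply Finset.sum_le_sum
        intro C hC
        have hCne : C.Nonempty := (Finset.mem_filter.mp hC).2.1
        have h1C : (1:ℝ) ≤ (C.card : ℝ) := by
          exact_mod_cast Finset.card_pos.mpr hCne
        nlinarith [hw0' C hC]
      nlinarith
    -- build balanced weights
    set lam : Finset (Fin n) → ℝ := fun C => if C ∈ 𝒞 then w (V C) / t else 0 with hlam
    have hlam0 : ∀ C, 0 ≤ lam C := by
      intro C
      by_cases hC : C ∈ 𝒞
      · simp only [hlam, if_pos hC]
        exact div_nonneg (hw0' C hC) htpos.le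
      · simp only [hlam, if_neg hC]
        exact le_rfl
    have hbal : ∀ i : Fin n,
        ∑ C ∈ (Finset.univ.filter
            (fun C : Finset (Fin n) => C.Nonempty ∧ C ≠ Finset.univ ∧ i ∈ C)),
          lam C = 1 := by
      intro i
      have key : ∑ C ∈ (Finset.univ.filter
            (fun C : Finset (Fin n) => C.Nonempty ∧ C ≠ Finset.univ ∧ i ∈ C)),
          lam C = (∑ C ∈ 𝒞, w (V C) * (if i ∈ C then (1:ℝ) else 0)) / t := by
        rw [Finset.sum_div]
        rw [show (Finset.univ.filter
            (fun C : Finset (Fin n) => C.Nonempty ∧ C ≠ Finset.univ ∧ i ∈ C))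
            = 𝒞.filter (fun C => i ∈ C) by
          rw [h𝒞, Finset.filter_filter]
          congr 1
          ext C
          tauto]
        rw [Finset.sum_filter]
        apply Finset.sum_congr rfl
        intro C hC
        by_cases hiC : i ∈ C <;> simp [hlam, hC, hiC]
      rw [key, hpi i, div_self (ne_of_gt htpos)]
    have hlamIcc : ∀ C, lam C ∈ Set.Icc (0:ℝ) 1 := by
      intro C
      refine ⟨hlam0 C, ?_⟩
      by_cases hC : C ∈ 𝒞
      · obtain ⟨i, hi⟩ : C.Nonempty := (Finset.mem_filter.mp hC).2.1
        have hCmem : C ∈ (Finset.univ.filter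
            (fun C : Finset (Fin n) => C.Nonempty ∧ C ≠ Finset.univ ∧ i ∈ C)) := by
          have := Finset.mem_filter.mp hC
          exact Finset.mem_filter.mpr ⟨Finset.mem_univ _, this.2.1, this.2.2, hi⟩
        calc lam C ≤ ∑ C' ∈ (Finset.univ.filter
            (fun C' : Finset (Fin n) => C'.Nonempty ∧ C' ≠ Finset.univ ∧ i ∈ C')),
            lam C' := Finset.single_le_sum (fun C' _ => hlam0 C') hCmem
          _ = 1 := hbal i
      · simp [hlam, hC]
    -- contradiction with hpL.2
    have hmain := h lam hlamIcc hbal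
    have hlhs : ∑ C ∈ 𝒞, lam C * φ C = p.2 / t := by
      rw [hp2, Finset.sum_div]
      apply Finset.sum_congr rfl
      intro C hC
      rw [hlam]
      simp [hC]
      ring
    rw [hlhs] at hmain
    have := hpL.2
    rw [div_lt_iff₀ htpos] at hmain
    nlinarith
  -- separation
  obtain ⟨f, u, v, hfP, huv, hfL⟩ :=
    geometric_hahn_banach_compact_closed hPconv hPcomp hLconv hLclosed hdisj
  set wv : Fin n → ℝ := fun i => f ((Pi.single i 1 : Fin n → ℝ), (0:ℝ)) with hwv
  set c : ℝ := f ((0 : Fin n → ℝ), (1:ℝ)) with hc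
  have flin : ∀ (x : Fin n → ℝ) (r : ℝ),
      f (x, r) = (∑ i, x i * wv i) + r * c := by
    intro x r
    have hxr : (x, r) = (∑ i, x i • ((Pi.single i 1 : Fin n → ℝ), (0:ℝ)))
        + r • ((0 : Fin n → ℝ), (1:ℝ)) := by
      refine Prod.ext ?_ ?_
      · simp only [Prod.fst_add, Prod.smul_fst, Prod.fst_sum]
        funext j
        simp [Finset.sum_apply, Pi.single_apply, mul_ite]
      · simp [Prod.snd_sum]
    rw [hxr, map_add, map_sum, map_smul]
    simp only [smul_eq_mul]
    congr 1
    apply Finset.sum_congr rfl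
    intro i _
    rw [map_smul, smul_eq_mul]
  -- f on elements of L
  have hL0 : v < 0 := by
    have : ((fun _ => (0:ℝ)), (0:ℝ)) ∈ L := by
      constructor
      · intro i; rfl
      · simp
    have hv := hfL _ this
    have : f ((fun _ => (0:ℝ)), (0:ℝ)) = 0 := by
      have : ((fun _ => (0:ℝ)), (0:ℝ)) = (0 : ((Fin n → ℝ) × ℝ)) := by rfl
      rw [this, map_zero]
    linarith
  have hS : (∑ i, wv i) + φ Finset.univ * c = 0 := by
    set S := (∑ i, wv i) + φ Finset.univ * c with hSdef
    by_contra hSne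
    have hmem : ∀ t : ℝ, ((fun _ => t), t * φ Finset.univ) ∈ L := by
      intro t
      constructor
      · intro i; rfl
      · simp
    have hval : ∀ t : ℝ, f ((fun _ => t), t * φ Finset.univ) = t * S := by
      intro t
      rw [flin]
      have h2 : ∑ i : Fin n, t * wv i = t * ∑ i, wv i := by rw [Finset.mul_sum]
      rw [h2, hSdef]
      ring
    have h1 := hfL _ (hmem ((v - 1) / S))
    rw [hval, div_mul_cancel₀ _ hSne] at h1
    linarith
  have hcnn : 0 ≤ c := by
    by_contra hcneg
    push_neg at hcneg
    have hmem : ((fun _ => (0:ℝ)), (v - 1) / c) ∈ L := by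
      constructor
      · intro i; rfl
      · simp only
        have : (0:ℝ) ≤ (v-1)/c := by
          apply div_nonneg_of_nonpos <;> linarith
        linarith [this]
    have h1 := hfL _ hmem
    rw [flin] at h1
    simp only [zero_mul, Finset.sum_const_zero, zero_add] at h1
    rw [div_mul_cancel₀ _ (ne_of_lt hcneg)] at h1
    linarith
  -- values on coalition points
  have hfV : ∀ C : Finset (Fin n), C.Nonempty → C ≠ Finset.univ →
      (∑ i ∈ C, wv i) + φ C * c < u := by
    intro C hCne hCu
    have hCmem : C ∈ 𝒞 := Finset.mem_filter.mpr ⟨Finset.mem_univ _, hCne, hCu⟩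
    have hVP : V C ∈ P := by
      apply subset_convexHull
      exact Finset.mem_coe.mpr (Finset.mem_image_of_mem V hCmem)
    have := hfP _ hVP
    rw [hV] at this
    rw [flin] at this
    convert this using 2
    simp [ite_mul, Finset.sum_ite_mem, Finset.univ_inter]
  -- c ≠ 0
  have hcpos : 0 < c := by
    rcases lt_or_eq_of_le hcnn with h' | h'
    · exact h'
    have hc0 : c = 0 := h'.symm
    have hwsum : ∑ i, wv i = 0 := by
      have := hS; rw [hc0] at this; linarith
    have hC1 : ({i₀} : Finset (Fin n)).Nonempty := Finset.singleton_nonempty _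
    have hC1u : ({i₀} : Finset (Fin n)) ≠ Finset.univ := by
      intro hcontra
      have : Finset.card ({i₀} : Finset (Fin n)) = n := by
        rw [hcontra, Finset.card_univ, Fintype.card_fin]
      simp at this
      omega
    have hC2ne : (Finset.univ \ {i₀} : Finset (Fin n)).Nonempty := by
      rw [Finset.sdiff_nonempty]
      intro hcontra
      have := Finset.card_le_card hcontra
      simp [Fintype.card_fin] at this
      omega
    have hC2u : (Finset.univ \ {i₀} : Finset (Fin n)) ≠ Finset.univ := by
      intro hcontra
      have : i₀ ∈ (Finset.univ \ {i₀} : Finset (Fin n)) := by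
        rw [hcontra]; exact Finset.mem_univ _
      simp at this
    have h1 := hfV _ hC1 hC1u
    have h2 := hfV _ hC2ne hC2u
    rw [hc0] at h1 h2
    have hsplit : (∑ i ∈ ({i₀} : Finset (Fin n)), wv i)
        + (∑ i ∈ (Finset.univ \ {i₀} : Finset (Fin n)), wv i) = ∑ i, wv i := by
      rw [add_comm]
      exact Finset.sum_sdiff (Finset.subset_univ _)
    rw [hwsum] at hsplit
    nlinarith
  -- conclusion
  refine ⟨fun i => -wv i / c, ?_, ?_⟩
  · rw [← Finset.sum_div]
    rw [Finset.sum_neg_distrib]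
    field_simp
    linarith [hS]
  · intro C hCne hCu
    have h1 := hfV C hCne hCu
    have h2 : (∑ i ∈ C, wv i) + φ C * c < 0 := by linarith
    rw [← Finset.sum_div, Finset.sum_neg_distrib]
    rw [lt_div_iff₀ hcpos]
    nlinarith
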